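/- Let A ∈ GL_n(ℚ) with n > 1 such that the characteristic polynomial of A^m is irreducible over ℚ for all m ≥ 1. Let S be a nonempty subset of the set R of n-tuples of ℝ^n whose coordinates are ℚ-linearly independent, such that A(S) ⊆ S, rS = S for every nonzero real r, and S is closed in R. Then there exists γ ∈ S such that for every ε > 0 there are infinitely many integers m with ‖A^m(γ)/‖A^m(γ)‖ − γ/‖γ‖‖ < ε. -/

import Mathlib

set_option maxHeartbeats 1000000

open Polynomial Matrix Set

section aux

lemma charmatrix_transpose' {n : ℕ} (M : Matrix (Fin n) (Fin n) ℚ) :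
    charmatrix Mᵀ = (charmatrix M)ᵀ := by
  ext i j
  by_cases h : i = j
  · subst h; simp
  · simp [charmatrix_apply_ne _ _ _ h, charmatrix_apply_ne _ _ _ (Ne.symm h),
      Matrix.transpose_apply]

lemma charpoly_transpose' {n : ℕ} (M : Matrix (Fin n) (Fin n) ℚ) :
    Mᵀ.charpoly = M.charpoly := by
  rw [Matrix.charpoly, charmatrix_transpose', Matrix.det_transpose, Matrix.charpoly]

lemma cyclic_span {n : ℕ} (D : Matrix (Fin n) (Fin n) ℚ)
    (hirr : Irreducible D.charpoly) (q : Fin n → ℚ) (hq : q ≠ 0)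
    (Q : Submodule ℚ (Fin n → ℚ)) (hQ : ∀ k : ℕ, (D ^ k) *ᵥ q ∈ Q) : Q = ⊤ := by
  classical
  set φ : ℚ[X] →ₗ[ℚ] (Fin n → ℚ) :=
    { toFun := fun p => (Polynomial.aeval D p) *ᵥ q
      map_add' := by intro p r; simp [Matrix.add_mulVec]
      map_smul' := by intro c p; simp [Matrix.smul_mulVec] } with hφ
  have hφ_apply : ∀ p : ℚ[X], φ p = (Polynomial.aeval D p) *ᵥ q := fun _ => rfl
  have hdegc : D.charpoly.natDegree = n := by
    simpa using Matrix.charpoly_natDegree_eq_dim D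
  have hrange : ∀ p : ℚ[X], φ p ∈ Q := by
    intro p
    induction p using Polynomial.induction_on' with
    | add p r hp hr => rw [map_add]; exact Q.add_mem hp hr
    | monomial k a =>
      have : φ ((Polynomial.monomial k) a) = a • ((D ^ k) *ᵥ q) := by
        rw [hφ_apply, ← Polynomial.C_mul_X_pow_eq_monomial, _root_.map_mul,
          Polynomial.aeval_C, Polynomial.aeval_X_pow, ← Matrix.mulVec_mulVec,
          show (algebraMap ℚ (Matrix (Fin n) (Fin n) ℚ)) a = a • 1 from
            Algebra.algebraMap_eq_smul_one a,
          Matrix.smul_mulVec, Matrix.one_mulVec]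
      rw [this]; exact Q.smul_mem _ (hQ k)
  have hker : ∀ p ∈ Polynomial.degreeLT ℚ n, φ p = 0 → p = 0 := by
    intro p hplt hp0
    by_contra hp
    have hndvd : ¬ D.charpoly ∣ p := by
      intro hdvd
      have hdeg := Polynomial.natDegree_le_of_dvd hdvd hp
      rw [hdegc] at hdeg
      have := Polynomial.mem_degreeLT.1 hplt
      rw [Polynomial.degree_eq_natDegree hp] at this
      exact absurd (Nat.cast_lt.mp this) (not_lt.2 hdeg)
    obtain ⟨a, b, hab⟩ := hirr.coprime_iff_not_dvd.2 hndvd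
    have h1 : φ 1 = q := by rw [hφ_apply]; simp [Matrix.one_mulVec]
    have h2 : φ (a * D.charpoly) = 0 := by
      rw [hφ_apply, _root_.map_mul, Matrix.aeval_self_charpoly, mul_zero,
        Matrix.zero_mulVec]
    have h3 : φ (b * p) = 0 := by
      rw [hφ_apply, _root_.map_mul, ← Matrix.mulVec_mulVec, ← hφ_apply, hp0,
        Matrix.mulVec_zero]
    exact hq (by rw [← h1, ← hab, map_add, h2, h3, add_zero])
  have hinj : Function.Injective (φ.comp (Polynomial.degreeLT ℚ n).subtype) := by
    rw [← LinearMap.ker_eq_bot, LinearMap.ker_eq_bot']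
    intro ⟨p, hplt⟩ hp0
    exact Subtype.ext (hker p hplt hp0)
  set ψ : (Polynomial.degreeLT ℚ n) →ₗ[ℚ] Q :=
    LinearMap.codRestrict Q (φ.comp (Polynomial.degreeLT ℚ n).subtype)
      (fun x => hrange _) with hψ
  have hinjψ : Function.Injective ψ := fun x y hxy => hinj (congrArg Subtype.val hxy)
  have hfr : n ≤ Module.finrank ℚ Q := by
    have h1 : Module.finrank ℚ (Polynomial.degreeLT ℚ n) = n := by
      rw [(Polynomial.degreeLTEquiv ℚ n).finrank_eq]; simp
    calc n = Module.finrank ℚ (Polynomial.degreeLT ℚ n) := h1.symm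
    _ ≤ Module.finrank ℚ Q := LinearMap.finrank_le_finrank_of_injective hinjψ
  have hle : Module.finrank ℚ Q ≤ n := by simpa using Submodule.finrank_le Q
  apply Submodule.eq_top_of_finrank_eq
  simp [le_antisymm hle hfr]

end aux

theorem recurrent_direction_exists {n : ℕ} (hn : 1 < n)
    (A : Matrix (Fin n) (Fin n) ℚ) (hA : IsUnit A)
    (hirr : ∀ m : ℕ, 1 ≤ m → Irreducible (Matrix.charpoly (A ^ m)))
    (S : Set (EuclideanSpace ℝ (Fin n)))
    (hSR : ∀ γ ∈ S, LinearIndependent ℚ (fun i : Fin n => γ i))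
    (hS : S.Nonempty)
    (hAS : ∀ γ ∈ S, Matrix.toEuclideanLin (A.map (fun q : ℚ => (q : ℝ))) γ ∈ S)
    (hscale : ∀ r : ℝ, r ≠ 0 → (fun γ : EuclideanSpace ℝ (Fin n) => r • γ) '' S = S)
    (hclosed : IsClosed
      {γ : {x : EuclideanSpace ℝ (Fin n) // LinearIndependent ℚ (fun i : Fin n => x i)} |
        (γ : EuclideanSpace ℝ (Fin n)) ∈ S}) :
    ∃ γ ∈ S, ∀ ε : ℝ, 0 < ε →
      {m : ℕ |
        ‖(‖Matrix.toEuclideanLin ((A ^ m).map (fun q : ℚ => (q : ℝ))) γ‖)⁻¹ •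
            Matrix.toEuclideanLin ((A ^ m).map (fun q : ℚ => (q : ℝ))) γ -
          ‖γ‖⁻¹ • γ‖ < ε}.Infinite := by
  classical
  set c : ℚ → ℝ := fun q : ℚ => (q : ℝ) with hc
  -- pointwise formula
  have happly : ∀ (M : Matrix (Fin n) (Fin n) ℚ) (x : EuclideanSpace ℝ (Fin n)) (j : Fin n),
      (Matrix.toEuclideanLin (M.map c) x) j = ∑ i, (M j i : ℝ) * x i := by
    intro M x j
    simp [Matrix.toEuclideanLin_apply, Matrix.mulVec, dotProduct, Matrix.map_apply, hc]
  -- composition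
  have hcompose : ∀ (M N : Matrix (Fin n) (Fin n) ℚ) (x : EuclideanSpace ℝ (Fin n)),
      Matrix.toEuclideanLin ((M * N).map c) x =
        Matrix.toEuclideanLin (M.map c) (Matrix.toEuclideanLin (N.map c) x) := by
    intro M N x
    have hmm : (M * N).map c = M.map c * N.map c := by
      have : c = ⇑(Rat.castHom ℝ) := rfl
      rw [this, Matrix.map_mul]
    rw [hmm]
    simp [Matrix.toEuclideanLin_apply, Matrix.mulVec_mulVec]
  have hone : ∀ x : EuclideanSpace ℝ (Fin n), Matrix.toEuclideanLin ((1 : Matrix (Fin n) (Fin n) ℚ).map c) x = x := by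
    intro x
    have : (1 : Matrix (Fin n) (Fin n) ℚ).map c = 1 := by
      have : c = ⇑(Rat.castHom ℝ) := rfl
      rw [this]; exact Matrix.map_one _ (map_zero _) (map_one _)
    rw [this]
    simp [Matrix.toEuclideanLin_apply, Matrix.one_mulVec]
  -- injectivity of powers
  obtain ⟨Au, hAu⟩ := hA
  have hinj : ∀ (m : ℕ) (x : EuclideanSpace ℝ (Fin n)), x ≠ 0 →
      Matrix.toEuclideanLin ((A ^ m).map c) x ≠ 0 := by
    intro m x hx h0
    apply hx
    have h1 : (↑Au⁻¹ : Matrix (Fin n) (Fin n) ℚ) ^ m * A ^ m = 1 := by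
      rw [← hAu, ← Units.val_pow_eq_pow_val, ← Units.val_pow_eq_pow_val, ← Units.val_mul,
        inv_pow, inv_mul_cancel, Units.val_one]
    calc x = Matrix.toEuclideanLin (((↑Au⁻¹ : Matrix (Fin n) (Fin n) ℚ) ^ m * A ^ m).map c) x := by
          rw [h1, hone]
    _ = Matrix.toEuclideanLin (((↑Au⁻¹ : Matrix (Fin n) (Fin n) ℚ) ^ m).map c)
          (Matrix.toEuclideanLin ((A ^ m).map c) x) := hcompose _ _ _
    _ = 0 := by rw [h0, map_zero]
  -- the projectivized map
  set B : EuclideanSpace ℝ (Fin n) → EuclideanSpace ℝ (Fin n) := fun x => Matrix.toEuclideanLin (A.map c) x with hB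
  set g : EuclideanSpace ℝ (Fin n) → EuclideanSpace ℝ (Fin n) := fun x => (‖B x‖)⁻¹ • B x with hg
  have hB1 : ∀ x : EuclideanSpace ℝ (Fin n), B x = Matrix.toEuclideanLin ((A ^ 1).map c) x := by
    intro x; rw [pow_one]
  have hBne : ∀ x : EuclideanSpace ℝ (Fin n), x ≠ 0 → B x ≠ 0 := by
    intro x hx
    rw [hB1]; exact hinj 1 x hx
  -- iterate formula
  have hgiter : ∀ (x : EuclideanSpace ℝ (Fin n)), ‖x‖ = 1 → ∀ m : ℕ,
      g^[m] x = (‖Matrix.toEuclideanLin ((A ^ m).map c) x‖)⁻¹ •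
        Matrix.toEuclideanLin ((A ^ m).map c) x := by
    intro x hx
    have hxne : x ≠ 0 := by intro h; rw [h, norm_zero] at hx; exact zero_ne_one hx
    intro m
    induction m with
    | zero =>
      simp only [Function.iterate_zero, id_eq, pow_zero]
      rw [hone x, hx, inv_one, one_smul]
    | succ m ih =>
      have hw : Matrix.toEuclideanLin ((A ^ m).map c) x ≠ 0 := hinj m x hxne
      set w : EuclideanSpace ℝ (Fin n) := Matrix.toEuclideanLin ((A ^ m).map c) x with hwdef
      have hnw : (0:ℝ) < ‖w‖ := norm_pos_iff.2 hw
      rw [Function.iterate_succ_apply', ih]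
      have hsucc : Matrix.toEuclideanLin ((A ^ (m+1)).map c) x = B w := by
        rw [pow_succ']
        rw [hcompose A (A ^ m) x]
      have hBsmul : B ((‖w‖)⁻¹ • w) = (‖w‖)⁻¹ • B w := by
        simp [hB]
      rw [hg]
      simp only [hBsmul, hsucc]
      have hBw : (0:ℝ) < ‖B w‖ := norm_pos_iff.2 (hBne w hw)
      rw [norm_smul, smul_smul]
      congr 1
      rw [Real.norm_eq_abs, abs_inv, abs_norm, mul_inv, inv_inv]
      field_simp
  -- S has no zero, normalization
  have hSne0 : ∀ x ∈ S, x ≠ 0 := by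
    intro x hxS hx0
    have hli := hSR x hxS
    rw [Fintype.linearIndependent_iff] at hli
    set q0 : Fin n → ℚ := Pi.single (⟨0, by omega⟩ : Fin n) (1:ℚ) with hq0
    have h0 : ∑ i, q0 i • x i = 0 := by
      rw [hx0]
      simp
    have := hli q0 h0 ⟨0, by omega⟩
    rw [hq0] at this
    simp at this
  have hSnorm : ∀ x ∈ S, (‖x‖)⁻¹ • x ∈ S := by
    intro x hxS
    have hx0 := hSne0 x hxS
    have hr : (‖x‖)⁻¹ ≠ 0 := inv_ne_zero (norm_ne_zero_iff.2 hx0)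
    rw [← hscale _ hr]
    exact ⟨x, hxS, rfl⟩
  -- the normalized set T
  set T : Set (EuclideanSpace ℝ (Fin n)) := {x | x ∈ S ∧ ‖x‖ = 1} with hT
  have hTS : T ⊆ S := fun x hx => hx.1
  have hTne : T.Nonempty := by
    obtain ⟨x, hx⟩ := hS
    refine ⟨(‖x‖)⁻¹ • x, hSnorm x hx, ?_⟩
    rw [norm_smul, Real.norm_eq_abs, abs_inv, abs_norm]
    field_simp [norm_ne_zero_iff.2 (hSne0 x hx)]
  have hgT : ∀ x ∈ T, g x ∈ T := by
    intro x hx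
    have h1 : B x ∈ S := hAS x hx.1
    refine ⟨hSnorm _ h1, ?_⟩
    rw [hg]
    simp only
    rw [norm_smul, Real.norm_eq_abs, abs_inv, abs_norm]
    field_simp [norm_ne_zero_iff.2 (hSne0 _ h1)]
  -- the compact set K
  set K : Set (EuclideanSpace ℝ (Fin n)) := closure T with hK
  have hTK : T ⊆ K := subset_closure
  have hKsphere : ∀ x ∈ K, ‖x‖ = 1 := by
    intro x hx
    have : K ⊆ {y : EuclideanSpace ℝ (Fin n) | ‖y‖ = 1} := by
      apply closure_minimal
      · exact fun y hy => hy.2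
      · exact isClosed_eq continuous_norm continuous_const
    exact this hx
  have hKne0 : ∀ x ∈ K, x ≠ 0 := by
    intro x hx h0
    have := hKsphere x hx
    rw [h0, norm_zero] at this
    exact zero_ne_one this
  have hKcompact : IsCompact K := by
    apply Metric.isCompact_of_isClosed_isBounded isClosed_closure
    have : T ⊆ Metric.closedBall 0 1 := by
      intro x hx
      simp [Metric.mem_closedBall, dist_eq_norm, hx.2.le]
    exact (Metric.isBounded_closedBall).subset
      ((closure_minimal this Metric.isClosed_closedBall))
  -- continuity of g away from zero
  have hBcont : Continuous B := (Matrix.toEuclideanLin (A.map c)).continuous_of_finiteDimensional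
  have hgca : ∀ x : EuclideanSpace ℝ (Fin n), x ≠ 0 → ContinuousAt g x := by
    intro x hx
    have h1 : ContinuousAt B x := hBcont.continuousAt
    have h2 : ContinuousAt (fun y => (‖B y‖)⁻¹) x := by
      apply ContinuousAt.inv₀ (h1.norm)
      exact norm_ne_zero_iff.2 (hBne x hx)
    exact h2.smul h1
  have hgcon : ∀ s : Set (EuclideanSpace ℝ (Fin n)), (∀ x ∈ s, x ≠ 0) → ContinuousOn g s :=
    fun s hs x hx => (hgca x (hs x hx)).continuousWithinAt
  -- invariant-set structure
  set 𝒞 : Set (Set (EuclideanSpace ℝ (Fin n))) :=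
    {C | C ⊆ K ∧ C.Nonempty ∧ IsClosed C ∧ g '' C ⊆ C} with h𝒞
  have hself : K ∈ 𝒞 := by
    refine ⟨le_refl _, hTne.mono hTK, isClosed_closure, ?_⟩
    have h1 : g '' K ⊆ closure (g '' T) := by
      rw [hK]
      exact ContinuousOn.image_closure (hgcon _ (fun x hx => hKne0 x hx))
    refine h1.trans (closure_mono ?_)
    intro y ⟨x, hx, hxy⟩
    exact hxy ▸ hgT x hx
  -- Zorn: minimal invariant set
  have hchaincond : ∀ ch ⊆ 𝒞, IsChain (· ⊆ ·) ch → ch.Nonempty →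
      ∃ lb ∈ 𝒞, ∀ s ∈ ch, lb ⊆ s := by
    intro ch hch hchain hchne
    refine ⟨⋂₀ ch, ?_, fun s hs => sInter_subset_of_mem hs⟩
    obtain ⟨C0, hC0⟩ := hchne
    have hchK : ∀ C ∈ ch, C ⊆ K := fun C hC => (hch hC).1
    have hchc : ∀ C ∈ ch, IsCompact C := fun C hC =>
      hKcompact.of_isClosed_subset (hch hC).2.2.1 (hchK C hC)
    refine ⟨(sInter_subset_of_mem hC0).trans (hchK _ hC0), ?_, ?_, ?_⟩
    · have : Nonempty ch := ⟨⟨C0, hC0⟩⟩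
      apply IsCompact.nonempty_sInter_of_directed_nonempty_isCompact_isClosed
      · exact IsChain.directedOn hchain.symm
      · exact fun C hC => (hch hC).2.1
      · exact fun C hC => hchc C hC
      · exact fun C hC => (hch hC).2.2.1
    · exact isClosed_sInter (fun C hC => (hch hC).2.2.1)
    · intro y ⟨x, hx, hxy⟩
      intro C hC
      exact (hch hC).2.2.2 ⟨x, (sInter_subset_of_mem hC) hx, hxy⟩
  obtain ⟨M, hMK, hMmin⟩ := zorn_superset_nonempty 𝒞 hchaincond K hself
  have hM𝒞 : M ∈ 𝒞 := hMmin.1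
  obtain ⟨hMsubK, hMne, hMclosed, hMinv⟩ := hM𝒞
  have hMcompact : IsCompact M := hKcompact.of_isClosed_subset hMclosed hMsubK
  have hMne0 : ∀ x ∈ M, x ≠ 0 := fun x hx => hKne0 x (hMsubK hx)
  have hMiter : ∀ (z : EuclideanSpace ℝ (Fin n)), z ∈ M → ∀ k : ℕ, g^[k] z ∈ M := by
    intro z hz k
    induction k with
    | zero => exact hz
    | succ k ih => rw [Function.iterate_succ_apply']; exact hMinv ⟨_, ih, rfl⟩
  -- orbit density in the minimal set
  have horbit : ∀ z ∈ M, ∀ N : ℕ,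
      closure {y | ∃ k : ℕ, N + 1 ≤ k ∧ y = g^[k] z} = M := by
    intro z hz N
    set O : Set (EuclideanSpace ℝ (Fin n)) := {y | ∃ k : ℕ, N + 1 ≤ k ∧ y = g^[k] z} with hO
    have hOM : O ⊆ M := by
      rintro y ⟨k, hk, rfl⟩
      exact hMiter z hz k
    have hclOM : closure O ⊆ M := closure_minimal hOM hMclosed
    have h𝒞O : closure O ∈ 𝒞 := by
      refine ⟨hclOM.trans hMsubK, ?_, isClosed_closure, ?_⟩
      · exact Set.Nonempty.mono subset_closure ⟨g^[N+1] z, N+1, le_refl _, rfl⟩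
      · have h1 : g '' closure O ⊆ closure (g '' O) :=
          ContinuousOn.image_closure (hgcon _ (fun x hx => hKne0 x (hclOM.trans hMsubK hx)))
        refine h1.trans (closure_mono ?_)
        rintro y ⟨x, ⟨k, hk, rfl⟩, rfl⟩
        exact ⟨k + 1, by omega, (Function.iterate_succ_apply' g k z).symm⟩
    exact le_antisymm hclOM (hMmin.2 h𝒞O hclOM)
  -- recurrence
  have hrec : ∀ z ∈ M, ∀ U : Set (EuclideanSpace ℝ (Fin n)), IsOpen U → z ∈ U → ∀ N : ℕ,
      ∃ m : ℕ, N + 1 ≤ m ∧ g^[m] z ∈ U := by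
    intro z hz U hU hzU N
    have h1 : z ∈ closure {y | ∃ k : ℕ, N + 1 ≤ k ∧ y = g^[k] z} := by
      rw [horbit z hz N]; exact hz
    obtain ⟨y, hyU, ⟨k, hk, rfl⟩⟩ := mem_closure_iff.1 h1 U hU hzU
    exact ⟨k, hk, hyU⟩
  -- subtype dynamics setup
  have hgM : ∀ z : M, g ↑z ∈ M := fun z => hMinv ⟨↑z, z.2, rfl⟩
  set G : M → M := fun z => ⟨g ↑z, hgM z⟩ with hG
  have hGiter : ∀ (k : ℕ) (z : M), ((G^[k] z : M) : EuclideanSpace ℝ (Fin n)) = g^[k] ↑z := by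
    intro k
    induction k with
    | zero => intro z; rfl
    | succ k ih =>
      intro z
      rw [Function.iterate_succ_apply', Function.iterate_succ_apply']
      rw [show ((G (G^[k] z) : M) : EuclideanSpace ℝ (Fin n)) = g ↑(G^[k] z) from rfl, ih]
  -- there is a point of M with Q-linearly independent coordinates
  have hMR : ∃ z ∈ M, LinearIndependent ℚ (fun i : Fin n => z i) := by
    by_contra hcon
    push_neg at hcon
    have hMnet : Nonempty M := hMne.to_subtype
    have hMcs : CompleteSpace M := hMclosed.completeSpace_coe
    set ZM : Submodule ℚ (Fin n → ℚ) → Set M := fun Q =>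
      {z : M | ∀ q ∈ Q, ∑ i, (q i : ℝ) * (z : EuclideanSpace ℝ (Fin n)) i = 0} with hZM
    have hcoord : ∀ i : Fin n,
        Continuous (fun z : M => (z : EuclideanSpace ℝ (Fin n)) i) := fun i =>
      (EuclideanSpace.proj (𝕜 := ℝ) i).continuous.comp continuous_subtype_val
    have hsumcont : ∀ q : Fin n → ℚ,
        Continuous (fun z : M => ∑ i, (q i : ℝ) * (z : EuclideanSpace ℝ (Fin n)) i) := by
      intro q
      apply continuous_finset_sum
      exact fun i _ => continuous_const.mul (hcoord i)
    have hZMclosed : ∀ Q, IsClosed (ZM Q) := by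
      intro Q
      have : ZM Q = ⋂ (q : Q), {z : M |
          ∑ i, ((q : Fin n → ℚ) i : ℝ) * (z : EuclideanSpace ℝ (Fin n)) i = 0} := by
        ext z; simp [hZM]
      rw [this]
      exact isClosed_iInter fun q => isClosed_eq (hsumcont _) continuous_const
    -- Baire category
    have hcover : ⋃ (q : {q : Fin n → ℚ // q ≠ 0}), {z : M |
        ∑ i, ((q : Fin n → ℚ) i : ℝ) * (z : EuclideanSpace ℝ (Fin n)) i = 0} = univ := by
      apply eq_univ_of_forall
      intro z
      have := hcon ↑z z.2
      rw [Fintype.not_linearIndependent_iff] at this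
      obtain ⟨q, hqsum, i, hqi⟩ := this
      refine mem_iUnion.2 ⟨⟨q, fun h => hqi (by rw [h]; rfl)⟩, ?_⟩
      show ∑ j, (q j : ℝ) * (z : EuclideanSpace ℝ (Fin n)) j = 0
      rw [← hqsum]
      exact Finset.sum_congr rfl fun j _ => (Rat.smul_def _ _).symm
    obtain ⟨q0, hq0⟩ := nonempty_interior_of_iUnion_of_closed
      (fun q : {q : Fin n → ℚ // q ≠ 0} => isClosed_eq (hsumcont _) continuous_const) hcover
    -- the predicate P and a maximal-rank submodule
    set P : Submodule ℚ (Fin n → ℚ) → Prop := fun Q =>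
      Q ≠ ⊥ ∧ (interior (ZM Q)).Nonempty with hP
    have hP0 : P (Submodule.span ℚ {(q0 : Fin n → ℚ)}) := by
      constructor
      · rw [Ne, Submodule.span_singleton_eq_bot]
        exact q0.2
      · refine hq0.mono (interior_mono ?_)
        intro z hz q hq
        obtain ⟨a, rfl⟩ := Submodule.mem_span_singleton.1 hq
        have hz' : ∑ i, ((q0 : Fin n → ℚ) i : ℝ) * (z : EuclideanSpace ℝ (Fin n)) i = 0 := hz
        calc ∑ i, ((a • (q0 : Fin n → ℚ)) i : ℝ) * (z : EuclideanSpace ℝ (Fin n)) i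
            = (a : ℝ) * ∑ i, ((q0 : Fin n → ℚ) i : ℝ) * (z : EuclideanSpace ℝ (Fin n)) i := by
              rw [Finset.mul_sum]
              refine Finset.sum_congr rfl fun i _ => ?_
              rw [Pi.smul_apply, smul_eq_mul]
              push_cast
              ring
        _ = 0 := by rw [hz', mul_zero]
    have hbdd : ∀ Q : Submodule ℚ (Fin n → ℚ), Module.finrank ℚ Q ≤ n := fun Q => by
      simpa using Submodule.finrank_le Q
    set RP : ℕ → Prop := fun r => ∃ Q, P Q ∧ Module.finrank ℚ Q = r with hRP
    have hd : RP (Nat.findGreatest RP n) :=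
      Nat.findGreatest_spec (hbdd _) ⟨_, hP0, rfl⟩
    have hdmax : ∀ Q, P Q → Module.finrank ℚ Q ≤ Nat.findGreatest RP n := fun Q hQ =>
      Nat.le_findGreatest (hbdd Q) ⟨Q, hQ, rfl⟩
    obtain ⟨Q, hPQ, hQd⟩ := hd
    obtain ⟨z, hzU⟩ := hPQ.2
    -- recurrence for z
    obtain ⟨O, hOopen, hOeq⟩ := isOpen_induced_iff.1 (isOpen_interior (s := ZM Q))
    have hzO : (z : EuclideanSpace ℝ (Fin n)) ∈ O := by
      rw [← Set.mem_preimage, hOeq]; exact hzU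
    obtain ⟨m, hm1, hmO⟩ := hrec ↑z z.2 O hOopen hzO 0
    have hGmU : G^[m] z ∈ interior (ZM Q) := by
      rw [← hOeq]
      show ((G^[m] z : M) : EuclideanSpace ℝ (Fin n)) ∈ O
      rw [hGiter]
      exact hmO
    -- the key submodule computation
    set D : Matrix (Fin n) (Fin n) ℚ := (A ^ m)ᵀ with hD
    set Q' : Submodule ℚ (Fin n → ℚ) := Q ⊔ Q.map (Matrix.mulVecLin D) with hQ'
    have hkey : ∀ x : M, x ∈ G^[m] ⁻¹' interior (ZM Q) → ∀ q2 ∈ Q,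
        ∑ i, ((D *ᵥ q2) i : ℝ) * (x : EuclideanSpace ℝ (Fin n)) i = 0 := by
      intro x hx q2 hq2
      have hxs : ‖(x : EuclideanSpace ℝ (Fin n))‖ = 1 := hKsphere _ (hMsubK x.2)
      set w : EuclideanSpace ℝ (Fin n) :=
        Matrix.toEuclideanLin ((A ^ m).map c) ↑x with hw
      have hwne : w ≠ 0 := hinj m ↑x (hMne0 _ x.2)
      have hnw : (0:ℝ) < ‖w‖ := norm_pos_iff.2 hwne
      have hy : ((G^[m] x : M) : EuclideanSpace ℝ (Fin n)) = (‖w‖)⁻¹ • w := by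
        rw [hGiter, hgiter ↑x hxs m]
      have hyz : ∀ q ∈ Q, ∑ j, (q j : ℝ) * ((‖w‖)⁻¹ • w) j = 0 := by
        intro q hq
        have := (interior_subset hx : G^[m] x ∈ ZM Q) q hq
        rw [hy] at this
        exact this
      have hsum0 : ∑ j, (q2 j : ℝ) * w j = 0 := by
        have h1 := hyz q2 hq2
        have h2 : ∑ j, (q2 j : ℝ) * ((‖w‖)⁻¹ • w) j
            = (‖w‖)⁻¹ * ∑ j, (q2 j : ℝ) * w j := by
          rw [Finset.mul_sum]
          refine Finset.sum_congr rfl fun j _ => ?_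
          rw [PiLp.smul_apply, smul_eq_mul]
          ring
        rw [h2] at h1
        rcases mul_eq_zero.1 h1 with h | h
        · exact absurd h (inv_ne_zero (ne_of_gt hnw))
        · exact h
      calc ∑ i, ((D *ᵥ q2) i : ℝ) * (x : EuclideanSpace ℝ (Fin n)) i
          = ∑ j, (q2 j : ℝ) * ∑ i, ((A ^ m) j i : ℝ) * (x : EuclideanSpace ℝ (Fin n)) i := by
            simp only [Matrix.mulVec, dotProduct, hD, Matrix.transpose_apply]
            push_cast
            simp only [Finset.sum_mul, Finset.mul_sum]
            rw [Finset.sum_comm]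
            refine Finset.sum_congr rfl fun j _ => Finset.sum_congr rfl fun i _ => by ring
      _ = ∑ j, (q2 j : ℝ) * w j := by
            refine Finset.sum_congr rfl fun j _ => ?_
            rw [hw, happly]
      _ = 0 := hsum0
    have hPQ' : P Q' := by
      constructor
      · intro h
        exact hPQ.1 (le_bot_iff.1 (h ▸ le_sup_left))
      · refine ⟨z, ?_⟩
        have hopen : IsOpen (interior (ZM Q) ∩ G^[m] ⁻¹' interior (ZM Q)) :=
          isOpen_interior.inter (((hgcon M hMne0).restrict.subtype_mk hgM).iterate m
            |>.isOpen_preimage _ isOpen_interior)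
        apply interior_maximal ?_ hopen ⟨hzU, hGmU⟩
        rintro x ⟨hx1, hx2⟩ q hq
        rw [hQ', Submodule.mem_sup] at hq
        obtain ⟨q1, hq1, q2', hq2', rfl⟩ := hq
        obtain ⟨q2, hq2, rfl⟩ := Submodule.mem_map.1 hq2'
        have e1 : ∀ i, ((q1 + Matrix.mulVecLin D q2) i : ℝ)
            = (q1 i : ℝ) + ((D *ᵥ q2) i : ℝ) := by
          intro i
          rw [Pi.add_apply, Matrix.mulVecLin_apply]
          push_cast
          ring
        have h1 := (interior_subset hx1 : x ∈ ZM Q) q1 hq1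
        have h2 := hkey x hx2 q2 hq2
        calc ∑ i, ((q1 + Matrix.mulVecLin D q2) i : ℝ) * (x : EuclideanSpace ℝ (Fin n)) i
            = ∑ i, ((q1 i : ℝ) * (x : EuclideanSpace ℝ (Fin n)) i
              + ((D *ᵥ q2) i : ℝ) * (x : EuclideanSpace ℝ (Fin n)) i) := by
              refine Finset.sum_congr rfl fun i _ => ?_
              rw [e1 i, add_mul]
        _ = 0 := by rw [Finset.sum_add_distrib, h1, h2, add_zero]
    -- maximality forces invariance
    have hQ'Q : Q = Q' := by
      refine Submodule.eq_of_le_of_finrank_le (le_sup_left : Q ≤ Q') ?_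
      rw [hQd]
      exact hdmax Q' hPQ'
    have hmapQ : Q.map (Matrix.mulVecLin D) ≤ Q :=
      le_trans (le_sup_right : Q.map (Matrix.mulVecLin D) ≤ Q') (le_of_eq hQ'Q.symm)
    obtain ⟨q, hqQ, hqne⟩ := Submodule.exists_mem_ne_zero_of_ne_bot hPQ.1
    have hpow : ∀ k : ℕ, (D ^ k) *ᵥ q ∈ Q := by
      intro k
      induction k with
      | zero => simpa [Matrix.one_mulVec] using hqQ
      | succ k ih =>
        rw [pow_succ', ← Matrix.mulVec_mulVec]
        exact hmapQ (Submodule.mem_map_of_mem ih)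
    have hirrD : Irreducible D.charpoly := by
      rw [hD, charpoly_transpose']
      exact hirr m (by omega)
    have hQtop : Q = ⊤ := cyclic_span D hirrD q hqne Q hpow
    -- contradiction: a point of the sphere is zero
    have hz0 : (z : EuclideanSpace ℝ (Fin n)) = 0 := by
      have hzZM := (interior_subset hzU : z ∈ ZM Q)
      ext i
      have := hzZM (Pi.single i 1) (hQtop ▸ Submodule.mem_top)
      show (z : EuclideanSpace ℝ (Fin n)) i = (0:ℝ)
      rw [← this, Finset.sum_eq_single i]
      · simp
      · intro b _ hb
        simp [Pi.single_apply, hb]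
      · simp
    have : ‖(z : EuclideanSpace ℝ (Fin n))‖ = 1 := hKsphere _ (hMsubK z.2)
    rw [hz0, norm_zero] at this
    exact zero_ne_one this
  -- final assembly
  obtain ⟨z, hzM, hzli⟩ := hMR
  have hzK : z ∈ K := hMsubK hzM
  have hz1 : ‖z‖ = 1 := hKsphere z hzK
  have hzS : z ∈ S := by
    have hTsub : ∀ x ∈ T, LinearIndependent ℚ (fun i : Fin n => x i) := fun x hx => hSR x hx.1
    set z' : {x : EuclideanSpace ℝ (Fin n) // LinearIndependent ℚ fun i : Fin n => x i} :=
      ⟨z, hzli⟩ with hz'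
    set T' : Set {x : EuclideanSpace ℝ (Fin n) // LinearIndependent ℚ fun i : Fin n => x i} :=
      {γ | ↑γ ∈ T} with hT'
    have himg : Subtype.val '' T' = T := by
      ext x
      constructor
      · rintro ⟨y, hy, rfl⟩; exact hy
      · intro hx; exact ⟨⟨x, hTsub x hx⟩, hx, rfl⟩
    have h1 : z' ∈ closure T' := by
      rw [closure_subtype, himg]
      exact hzK
    have h2 : closure T' ⊆ {γ : {x : EuclideanSpace ℝ (Fin n) //
        LinearIndependent ℚ fun i : Fin n => x i} | ↑γ ∈ S} :=
      closure_minimal (fun γ hγ => hTS hγ) hclosed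
    exact h2 h1
  refine ⟨z, hzS, ?_⟩
  intro ε hε
  apply Set.infinite_of_not_bddAbove
  rintro ⟨b, hb⟩
  obtain ⟨m, hm1, hmball⟩ := hrec z hzM (Metric.ball z ε) Metric.isOpen_ball
    (Metric.mem_ball_self hε) b
  have hmem : m ∈ {m : ℕ |
      ‖(‖Matrix.toEuclideanLin ((A ^ m).map c) z‖)⁻¹ •
          Matrix.toEuclideanLin ((A ^ m).map c) z - ‖z‖⁻¹ • z‖ < ε} := by
    show ‖(‖Matrix.toEuclideanLin ((A ^ m).map c) z‖)⁻¹ •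
        Matrix.toEuclideanLin ((A ^ m).map c) z - ‖z‖⁻¹ • z‖ < ε
    rw [← hgiter z hz1 m, hz1, inv_one, one_smul]
    exact mem_ball_iff_norm.1 hmball
  have := hb hmem
  omega
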